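/- Let X and Y be separable locally compact Hausdorff spaces. Assume: (ii) for every nonempty regular open set A ⊆ X with compact closure there exists f ∈ C_c(X,ℝ) with σ(f) = A, and likewise for every nonempty regular open set B ⊆ Y with compact closure there exists g ∈ C_c(Y,ℝ) with σ(g) = B; (iii) there is an order isomorphism (with respect to set inclusion) between the collection of regular open subsets of X with compact closure and the collection of regular open subsets of Y with compact closure. Then there exists a bijection T : C_c(X,ℝ) → C_c(Y,ℝ) such that for all f,g ∈ C_c(X,ℝ), f ⊥ g if and only if Tf ⊥ Tg. -/

import Mathlib

open Set Topology

section Aux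

variable {Z : Type*} [TopologicalSpace Z]

/-- `interior (closure S)` is regular open. -/
lemma stmt4_regOpen (S : Set Z) :
    interior (closure (interior (closure S))) = interior (closure S) := by
  apply le_antisymm
  · exact interior_mono (closure_minimal interior_subset isClosed_closure)
  · exact isOpen_interior.subset_interior_closure

lemma stmt4_step {U S : Set Z} (hU : IsOpen U) (h : U ∩ S = ∅) :
    U ∩ interior (closure S) = ∅ := by
  have h1 : U ∩ closure S = ∅ := by
    have := hU.inter_closure (t := S)
    rw [h, closure_empty] at this
    exact subset_empty_iff.mp this
  exact subset_empty_iff.mp <| (inter_subset_inter_right U interior_subset).trans h1.subset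

/-- Disjoint open sets have disjoint regularizations. -/
lemma stmt4_disj {U V : Set Z} (hU : IsOpen U) (hV : IsOpen V) (h : U ∩ V = ∅) :
    interior (closure U) ∩ interior (closure V) = ∅ := by
  have h1 : V ∩ interior (closure U) = ∅ := stmt4_step hV (by rwa [inter_comm])
  have h2 : interior (closure U) ∩ interior (closure V) = ∅ :=
    stmt4_step isOpen_interior (by rwa [inter_comm])
  exact h2

/-- The map `σ : C_c(Z) → RO_c(Z)`. -/
noncomputable def stmt4Sigma (f : {f : C(Z, ℝ) // HasCompactSupport ⇑f}) :
    {A : Set Z // interior (closure A) = A ∧ IsCompact (closure A)} :=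
  ⟨interior (closure {x | f.1 x ≠ 0}), stmt4_regOpen _, by
    refine f.2.of_isClosed_subset isClosed_closure ?_
    have : closure (interior (closure {x | f.1 x ≠ 0})) ⊆ closure {x | f.1 x ≠ 0} :=
      closure_minimal interior_subset isClosed_closure
    exact this⟩

lemma stmt4_openNe (f : C(Z, ℝ)) : IsOpen {x | f x ≠ 0} :=
  isOpen_compl_singleton.preimage f.continuous

lemma stmt4_ne_subset_sigma (f : {f : C(Z, ℝ) // HasCompactSupport ⇑f}) :
    {x | f.1 x ≠ 0} ⊆ (stmt4Sigma f).1 :=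
  (stmt4_openNe f.1).subset_interior_closure

/-- Orthogonality of functions is equivalent to disjointness of their regular open sets. -/
lemma stmt4_orth_iff (f g : {f : C(Z, ℝ) // HasCompactSupport ⇑f}) :
    {x | f.1 x ≠ 0} ∩ {x | g.1 x ≠ 0} = ∅ ↔ (stmt4Sigma f).1 ∩ (stmt4Sigma g).1 = ∅ := by
  constructor
  · intro h
    exact stmt4_disj (stmt4_openNe f.1) (stmt4_openNe g.1) h
  · intro h
    exact subset_empty_iff.mp <|
      (inter_subset_inter (stmt4_ne_subset_sigma f) (stmt4_ne_subset_sigma g)).trans h.subset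

/-- If `σ f = ∅` then `f = 0`. -/
lemma stmt4_sigma_empty {f : {f : C(Z, ℝ) // HasCompactSupport ⇑f}}
    (h : (stmt4Sigma f).1 = ∅) : f.1 = 0 := by
  have hsub : {x | f.1 x ≠ 0} ⊆ (∅ : Set Z) := h ▸ stmt4_ne_subset_sigma f
  ext x
  by_contra hx
  exact hsub hx

lemma stmt4_zero_mem : HasCompactSupport ⇑(0 : C(Z, ℝ)) := by
  have : ⇑(0 : C(Z, ℝ)) = (fun _ => (0 : ℝ)) := rfl
  rw [HasCompactSupport, this, tsupport]
  simp [Function.support]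

/-- uniqueness of the fiber over the empty set -/
noncomputable def stmt4UniqueFiber (A : {A : Set Z // interior (closure A) = A ∧
    IsCompact (closure A)}) (hA : A.1 = ∅) :
    Unique {f : {f : C(Z, ℝ) // HasCompactSupport ⇑f} // stmt4Sigma f = A} := by
  refine ⟨⟨⟨⟨0, stmt4_zero_mem⟩, ?_⟩⟩, ?_⟩
  · apply Subtype.ext
    rw [hA]
    show interior (closure {x | (0 : C(Z, ℝ)) x ≠ 0}) = ∅
    have : {x | (0 : C(Z, ℝ)) x ≠ 0} = (∅ : Set Z) := by
      ext x; simp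
    rw [this, closure_empty, interior_empty]
  · rintro ⟨f, hf⟩
    have : f.1 = 0 := stmt4_sigma_empty (by rw [hf, hA])
    apply Subtype.ext
    apply Subtype.ext
    exact this

lemma stmt4_char {W : Type*} [TopologicalSpace W]
    (P Q : {S : Set W // interior (closure S) = S ∧ IsCompact (closure S)}) :
    (P.1 ∩ Q.1 = ∅ ↔ ∀ C, C ≤ P → C ≤ Q → C.1 = ∅) := by
  constructor
  · intro h C hCP hCQ
    have h1 : C.1 ⊆ P.1 := hCP
    have h2 : C.1 ⊆ Q.1 := hCQ
    exact subset_empty_iff.mp <| (subset_inter h1 h2).trans h.subset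
  · intro h
    have hPopen : IsOpen P.1 := by rw [← P.2.1]; exact isOpen_interior
    have hQopen : IsOpen Q.1 := by rw [← Q.2.1]; exact isOpen_interior
    have hreg : interior (closure (P.1 ∩ Q.1)) = P.1 ∩ Q.1 := by
      apply le_antisymm
      · refine subset_inter ?_ ?_
        · calc interior (closure (P.1 ∩ Q.1)) ⊆ interior (closure P.1) :=
                interior_mono (closure_mono inter_subset_left)
            _ = P.1 := P.2.1
        · calc interior (closure (P.1 ∩ Q.1)) ⊆ interior (closure Q.1) :=
                interior_mono (closure_mono inter_subset_right)
            _ = Q.1 := Q.2.1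
      · exact (hPopen.inter hQopen).subset_interior_closure
    have hcpt : IsCompact (closure (P.1 ∩ Q.1)) :=
      P.2.2.of_isClosed_subset isClosed_closure (closure_mono inter_subset_left)
    exact h ⟨P.1 ∩ Q.1, hreg, hcpt⟩ inter_subset_left inter_subset_right

end Aux

section Card

open Cardinal

variable {Z : Type*} [TopologicalSpace Z] [TopologicalSpace.SeparableSpace Z]

lemma stmt4_card_cont_le : #C(Z, ℝ) ≤ 𝔠 := by
  obtain ⟨s, hsc, hsd⟩ := TopologicalSpace.exists_countable_dense Z
  have hinj : Function.Injective (fun f : C(Z, ℝ) => (fun x : s => f x)) := by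
    intro f g h
    apply ContinuousMap.ext
    have := Continuous.ext_on hsd f.continuous g.continuous
      (fun x hx => congrFun h ⟨x, hx⟩)
    exact fun x => congrFun this x
  calc #C(Z, ℝ) ≤ #(s → ℝ) := Cardinal.mk_le_of_injective hinj
    _ = 𝔠 ^ Cardinal.lift.{0} #s := by
        rw [Cardinal.mk_arrow, Cardinal.mk_real, Cardinal.lift_continuum]
    _ ≤ 𝔠 ^ ℵ₀ := by
        apply Cardinal.power_le_power_left Cardinal.continuum_ne_zero
        simpa using Cardinal.mk_le_aleph0_iff.mpr hsc.to_subtype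
    _ = 𝔠 := Cardinal.continuum_power_aleph0

lemma stmt4_fiber_card
    (hZ : ∀ A : Set Z, interior (closure A) = A → IsCompact (closure A) → A.Nonempty →
      ∃ f : C(Z, ℝ), HasCompactSupport ⇑f ∧ interior (closure {x | f x ≠ 0}) = A)
    (A : {A : Set Z // interior (closure A) = A ∧ IsCompact (closure A)})
    (hne : A.1.Nonempty) :
    #{f : {f : C(Z, ℝ) // HasCompactSupport ⇑f} // stmt4Sigma f = A} = 𝔠 := by
  obtain ⟨f₀, hc₀, hσ₀⟩ := hZ A.1 A.2.1 A.2.2 hne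
  -- f₀ is nonzero somewhere
  have hx₀ : ∃ x, f₀ x ≠ 0 := by
    by_contra h
    push_neg at h
    have : {x | f₀ x ≠ 0} = (∅ : Set Z) := by ext x; simp [h x]
    rw [this, closure_empty, interior_empty] at hσ₀
    exact hne.ne_empty hσ₀.symm
  obtain ⟨x₀, hx₀⟩ := hx₀
  apply le_antisymm
  · -- upper bound
    have hinj : Function.Injective
        (fun f : {f : {f : C(Z, ℝ) // HasCompactSupport ⇑f} // stmt4Sigma f = A} => f.1.1) :=
      fun f g h => Subtype.ext (Subtype.ext h)
    exact (Cardinal.mk_le_of_injective hinj).trans stmt4_card_cont_le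
  · -- lower bound: t • f₀ for t ∈ Ioi 0
    have key : ∀ t : ℝ, t ∈ Set.Ioi (0:ℝ) →
        {x | (t • f₀) x ≠ 0} = {x | f₀ x ≠ 0} := by
      intro t ht
      have ht' : t ≠ 0 := ne_of_gt ht
      ext x
      simp only [ContinuousMap.smul_apply, smul_eq_mul, mem_setOf_eq]
      simp [mul_ne_zero_iff, ht']
    have hsupp : ∀ t : Set.Ioi (0:ℝ), HasCompactSupport ⇑((t:ℝ) • f₀) := by
      intro t
      refine hc₀.of_isClosed_subset isClosed_closure ?_
      show closure {x | ((t:ℝ) • f₀) x ≠ 0} ⊆ tsupport ⇑f₀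
      rw [key t t.2]
      exact closure_mono fun x hx => hx
    let Φ : Set.Ioi (0:ℝ) → {f : {f : C(Z, ℝ) // HasCompactSupport ⇑f} // stmt4Sigma f = A} :=
      fun t => ⟨⟨(t : ℝ) • f₀, hsupp t⟩, by
        apply Subtype.ext
        show interior (closure {x | ((t:ℝ) • f₀) x ≠ 0}) = A.1
        rw [key t t.2, hσ₀]⟩
    have hinj : Function.Injective Φ := by
      intro t t' h
      have h1 : (t : ℝ) • f₀ = (t' : ℝ) • f₀ := congrArg (fun f => f.1.1) h
      have h2 : (t : ℝ) * f₀ x₀ = (t' : ℝ) * f₀ x₀ := by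
        have := congrFun (congrArg (fun f : C(Z,ℝ) => ⇑f) h1) x₀
        simpa using this
      exact Subtype.ext (mul_right_cancel₀ hx₀ h2)
    have hle := Cardinal.lift_mk_le'.mpr ⟨⟨Φ, hinj⟩⟩
    rw [Cardinal.mk_Ioi_real, Cardinal.lift_continuum] at hle
    simpa using hle

end Card

/-- If `X` and `Y` are separable locally compact Hausdorff spaces such that every nonempty
regular open set with compact closure is `σ(f)` for some compactly supported continuous
function, and the generalized Boolean algebras of regular open sets with compact closure of
`X` and `Y` are order isomorphic, then `C_c(X)` and `C_c(Y)` are `⊥`-isomorphic. -/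
theorem stmt_4 {X Y : Type*}
    [TopologicalSpace X] [LocallyCompactSpace X] [T2Space X] [TopologicalSpace.SeparableSpace X]
    [TopologicalSpace Y] [LocallyCompactSpace Y] [T2Space Y] [TopologicalSpace.SeparableSpace Y]
    -- (ii) every nonempty regular open set with compact closure is `σ(f)` for some `f ∈ C_c`
    (hX : ∀ A : Set X, interior (closure A) = A → IsCompact (closure A) → A.Nonempty →
      ∃ f : C(X, ℝ), HasCompactSupport ⇑f ∧ interior (closure {x | f x ≠ 0}) = A)
    (hY : ∀ B : Set Y, interior (closure B) = B → IsCompact (closure B) → B.Nonempty →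
      ∃ g : C(Y, ℝ), HasCompactSupport ⇑g ∧ interior (closure {y | g y ≠ 0}) = B)
    -- (iii) an order isomorphism between the regular open sets with compact closure
    (e : {A : Set X // interior (closure A) = A ∧ IsCompact (closure A)} ≃o
         {B : Set Y // interior (closure B) = B ∧ IsCompact (closure B)}) :
    ∃ T : {f : C(X, ℝ) // HasCompactSupport ⇑f} → {g : C(Y, ℝ) // HasCompactSupport ⇑g},
      Function.Bijective T ∧
      ∀ f g : {f : C(X, ℝ) // HasCompactSupport ⇑f},
        ({x | (f : C(X, ℝ)) x ≠ 0} ∩ {x | (g : C(X, ℝ)) x ≠ 0} = ∅ ↔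
         {y | (T f : C(Y, ℝ)) y ≠ 0} ∩ {y | (T g : C(Y, ℝ)) y ≠ 0} = ∅) := by
  classical
  -- the bottom elements
  set botX : {A : Set X // interior (closure A) = A ∧ IsCompact (closure A)} :=
    ⟨∅, by rw [closure_empty, interior_empty], by rw [closure_empty]; exact isCompact_empty⟩
    with hbotX
  set botY : {B : Set Y // interior (closure B) = B ∧ IsCompact (closure B)} :=
    ⟨∅, by rw [closure_empty, interior_empty], by rw [closure_empty]; exact isCompact_empty⟩
    with hbotY
  have hbotX_le : ∀ A, botX ≤ A := fun A => by
    show botX.1 ⊆ A.1; simp [hbotX]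
  have hbotY_le : ∀ B, botY ≤ B := fun B => by
    show botY.1 ⊆ B.1; simp [hbotY]
  have he_bot : e botX = botY := by
    apply le_antisymm
    · have := e.monotone (hbotX_le (e.symm botY))
      rwa [e.apply_symm_apply] at this
    · exact hbotY_le _
  -- e preserves nonemptiness
  have he_ne : ∀ A, (e A).1.Nonempty ↔ A.1.Nonempty := by
    intro A
    rw [nonempty_iff_ne_empty, nonempty_iff_ne_empty]
    constructor
    · intro h hA
      apply h
      have : A = botX := Subtype.ext hA
      rw [this, he_bot]
    · intro h hA
      apply h
      have : e A = botY := Subtype.ext hA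
      have := congrArg e.symm this
      rw [e.symm_apply_apply, ← he_bot, e.symm_apply_apply] at this
      rw [this]
  -- fiberwise equivalences
  have key : ∀ A, Nonempty ({f : {f : C(X, ℝ) // HasCompactSupport ⇑f} // stmt4Sigma f = A} ≃
      {g : {g : C(Y, ℝ) // HasCompactSupport ⇑g} // stmt4Sigma g = e A}) := by
    intro A
    by_cases hA : A.1.Nonempty
    · apply Cardinal.lift_mk_eq'.mp
      rw [stmt4_fiber_card hX A hA, stmt4_fiber_card hY (e A) ((he_ne A).mpr hA),
        Cardinal.lift_continuum, Cardinal.lift_continuum]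
    · rw [not_nonempty_iff_eq_empty] at hA
      have hA' : (e A).1 = ∅ := by
        rw [← not_nonempty_iff_eq_empty, he_ne]
        rw [hA]; simp
      haveI := stmt4UniqueFiber A hA
      haveI := stmt4UniqueFiber (e A) hA'
      exact ⟨Equiv.ofUnique _ _⟩
  let F := fun A => Classical.choice (key A)
  -- the global equivalence
  let E : {f : C(X, ℝ) // HasCompactSupport ⇑f} ≃ {g : C(Y, ℝ) // HasCompactSupport ⇑g} :=
    (Equiv.sigmaFiberEquiv stmt4Sigma).symm.trans
      ((Equiv.sigmaCongr e.toEquiv F).trans (Equiv.sigmaFiberEquiv stmt4Sigma))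
  have hE : ∀ f, stmt4Sigma (E f) = e (stmt4Sigma f) := by
    intro f
    exact ((F (stmt4Sigma f)) ⟨f, rfl⟩).2
  refine ⟨E, E.bijective, ?_⟩
  intro f g
  rw [stmt4_orth_iff f g, stmt4_orth_iff (E f) (E g), hE f, hE g]
  -- now prove: disjointness is order-theoretic, hence preserved by e
  set A := stmt4Sigma f with hA
  set B := stmt4Sigma g with hB
  rw [stmt4_char A B, stmt4_char (e A) (e B)]
  constructor
  · intro h C' hC'A hC'B
    have h1 : e.symm C' ≤ A := by
      have := e.symm.monotone hC'A
      rwa [e.symm_apply_apply] at this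
    have h2 : e.symm C' ≤ B := by
      have := e.symm.monotone hC'B
      rwa [e.symm_apply_apply] at this
    have h3 : (e.symm C').1 = ∅ := h _ h1 h2
    have h4 : e.symm C' = botX := Subtype.ext h3
    have h5 : C' = e botX := by
      have := congrArg e h4
      rwa [e.apply_symm_apply] at this
    rw [h5, he_bot]
  · intro h C hCA hCB
    have h1 : e C ≤ e A := e.monotone hCA
    have h2 : e C ≤ e B := e.monotone hCB
    have h3 : (e C).1 = ∅ := h _ h1 h2
    have h4 : e C = botY := Subtype.ext h3
    have h5 : C = botX := by
      have := congrArg e.symm h4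
      rwa [e.symm_apply_apply, ← he_bot, e.symm_apply_apply] at this
    rw [h5]
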